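/- Let P : ℝ → ℝ be a positive differentiable function satisfying P' = X·P + U, where lim_{η→∞} X(η) = -1 and lim_{η→∞} U(η) = 0. Then lim_{η→∞} P(η) = 0. -/

import Mathlib

/-- Special case `u = 0` of the ODE comparison lemma. -/
theorem stmt_1 (P X U : ℝ → ℝ)
    (hpos : ∀ η, 0 < P η) (hdiff : Differentiable ℝ P)
    (hode : ∀ η, deriv P η = X η * P η + U η)
    (hX : Filter.Tendsto X Filter.atTop (nhds (-1)))
    (hU : Filter.Tendsto U Filter.atTop (nhds 0)) :
    Filter.Tendsto P Filter.atTop (nhds 0) := by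
  rw [tendsto_order]
  constructor
  · intro a ha
    filter_upwards with η using lt_trans ha (hpos η)
  intro ε hε
  -- eventually X ≤ -1/2 and |U| ≤ ε/8
  have hX' : ∀ᶠ η in Filter.atTop, X η ≤ -(1/2) := by
    have : Set.Iio (-(1/2) : ℝ) ∈ nhds (-1 : ℝ) := Iio_mem_nhds (by norm_num)
    exact (hX.eventually_mem this).mono fun x hx => le_of_lt hx
  have hU' : ∀ᶠ η in Filter.atTop, |U η| ≤ ε / 8 := by
    have : Metric.ball (0 : ℝ) (ε / 8) ∈ nhds (0 : ℝ) :=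
      Metric.ball_mem_nhds _ (by positivity)
    refine (hU.eventually_mem this).mono fun x hx => ?_
    simp only [Metric.mem_ball, Real.dist_eq, sub_zero] at hx
    exact le_of_lt hx
  obtain ⟨a₀, ha₀⟩ := (hX'.and hU').exists_forall_of_atTop
  -- key derivative estimate
  have hkey : ∀ η, a₀ ≤ η → ε / 2 ≤ P η → deriv P η ≤ -(ε / 8) := by
    intro η hη hP
    obtain ⟨h1, h2⟩ := ha₀ η hη
    have h3 : U η ≤ ε / 8 := (abs_le.1 h2).2
    have h4 : X η * P η ≤ -(1/2) * P η :=
      mul_le_mul_of_nonneg_right h1 (hpos η).le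
    rw [hode]
    nlinarith
  -- Step 1: P drops below ε/2 somewhere
  obtain ⟨b, hb, hPb⟩ : ∃ b, a₀ ≤ b ∧ P b < ε / 2 := by
    by_contra h
    push_neg at h
    set c := a₀ + 8 * P a₀ / ε with hc_def
    clear_value c
    have hc : a₀ ≤ c := by
      have hp := hpos a₀
      have : 0 ≤ 8 * P a₀ / ε := by positivity
      linarith
    have hineq := Convex.mul_sub_le_image_sub_of_le_deriv (convex_Ici a₀)
      (f := fun η => -P η) (C := ε / 8)
      (hdiff.neg.continuous.continuousOn)
      (hdiff.neg.differentiableOn)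
      (fun x hx => by
        rw [interior_Ici] at hx
        have hx' : a₀ ≤ x := le_of_lt hx
        have : deriv (fun η => -P η) x = -deriv P x := deriv.fun_neg
        rw [this]
        have := hkey x hx' (h x hx')
        linarith)
      a₀ (Set.self_mem_Ici) c hc hc
    beta_reduce at hineq
    have hεc : ε / 8 * (c - a₀) = P a₀ := by
      rw [hc_def]
      field_simp
      ring
    have := hpos c
    nlinarith
  -- Step 2: P stays below ε after b
  have hfin : ∀ c, b ≤ c → P c < ε := by
    intro c hc
    by_contra hPc
    push_neg at hPc
    have hbc : b < c := by
      rcases lt_or_eq_of_le hc with h | h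
      · exact h
      · exfalso; rw [h] at hPb; linarith
    set S := {η | η ∈ Set.Icc b c ∧ P η ≤ ε / 2} with hS_def
    have hSclosed : IsClosed S := by
      have : S = Set.Icc b c ∩ P ⁻¹' Set.Iic (ε / 2) := by
        ext x; simp [hS_def, Set.mem_Icc, and_assoc]
      rw [this]
      exact isClosed_Icc.inter (isClosed_Iic.preimage hdiff.continuous)
    have hSne : S.Nonempty := ⟨b, ⟨le_refl b, hbc.le⟩, hPb.le⟩
    have hSbd : BddAbove S := ⟨c, fun x hx => hx.1.2⟩
    set d := sSup S with hd_def
    have hdS : d ∈ S := hSclosed.csSup_mem hSne hSbd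
    obtain ⟨⟨hbd, hdc⟩, hPd⟩ := hdS
    have hanti : AntitoneOn P (Set.Icc d c) := by
      apply antitoneOn_of_deriv_nonpos (convex_Icc d c)
        (hdiff.continuous.continuousOn) (hdiff.differentiableOn)
      intro x hx
      rw [interior_Icc] at hx
      have hxa : a₀ ≤ x := le_trans hb (le_trans hbd hx.1.le)
      have hxP : ε / 2 ≤ P x := by
        by_contra hxP
        push_neg at hxP
        have hxS : x ∈ S := ⟨⟨le_trans hbd hx.1.le, hx.2.le⟩, hxP.le⟩
        exact absurd (le_csSup hSbd hxS) (not_le.2 hx.1)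
      have := hkey x hxa hxP
      linarith
    have hPcd : P c ≤ P d :=
      hanti ⟨le_refl d, hdc⟩ ⟨hdc, le_refl c⟩ hdc
    linarith
  filter_upwards [Filter.eventually_ge_atTop b] with η hη using hfin η hη
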